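/- Suppose n > 1 and f^ω(0) contains a factor X₁YX₂ with X₁ ∼ X₂ and |X₁| ≥ 24n. Then f^ω(0) contains a factor x̂₁ŷx̂₂ with x̂₁ ∼ x̂₂, |X₁Y| ≥ (13n/(n+1))·|x̂₁ŷ|, and |X₁YX₂|/|X₁Y| ≤ |x̂₁ŷx̂₂|/|x̂₁ŷ| + 72/|X₁Y|. -/

import Mathlib

/-- The image of 0 under the morphism: 0740103050260. -/
def f0 : List (Fin 8) := [0,7,4,0,1,0,3,0,5,0,2,6,0]

/-- The cyclic shift morphism σ, sending each letter a to a+1 (mod 8). -/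
def sigmaW (w : List (Fin 8)) : List (Fin 8) := w.map (· + 1)

/-- The image of a letter under the cyclic morphism f: f(a) = σ^a(f(0)). -/
def fL (a : Fin 8) : List (Fin 8) := f0.map (· + a)

/-- The morphism f extended to words. -/
def fW (w : List (Fin 8)) : List (Fin 8) := w.flatMap fL

/-- f^n(0). -/
def fIter (n : ℕ) : List (Fin 8) := fW^[n] [0]

/-- u is a factor of the fixed point f^ω(0): since f^n(0) is a prefix of
f^{n+1}(0), this holds iff u is a factor of some f^n(0). -/
def FactorFP (u : List (Fin 8)) : Prop := ∃ n, u <:+: fIter n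

/-- A letter of Σ ∪ {ε} viewed as a word. -/
def optL (a : Option (Fin 8)) : List (Fin 8) := a.elim [] (fun x => [x])

/-- The image under f of an element of Σ ∪ {ε}. -/
def imgF (a : Option (Fin 8)) : List (Fin 8) := a.elim [] fL

lemma count_fL (b a : Fin 8) : (fL b).count a = 1 + 5 * (if a = b then 1 else 0) := by
  revert b a; decide

lemma length_fL (b : Fin 8) : (fL b).length = 13 := by revert b; decide

lemma fW_nil : fW [] = [] := rfl
lemma fW_cons (c : Fin 8) (w : List (Fin 8)) : fW (c :: w) = fL c ++ fW w := rfl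
lemma fW_append (v w : List (Fin 8)) : fW (v ++ w) = fW v ++ fW w := by
  simp [fW, List.flatMap_append]

lemma length_fW (w : List (Fin 8)) : (fW w).length = 13 * w.length := by
  induction w with
  | nil => rfl
  | cons c w ih => simp [fW_cons, ih, length_fL]; ring

lemma count_fW (a : Fin 8) (w : List (Fin 8)) :
    (fW w).count a = w.length + 5 * w.count a := by
  induction w with
  | nil => rfl
  | cons c w ih =>
    simp [fW_cons, List.count_append, ih, count_fL, List.count_cons]
    by_cases h : a = c
    · simp [h]; ring
    · have h' : ¬ (c = a) := fun e => h e.symm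
      simp [h, h']; ring

lemma tails_piece : ∀ c : Fin 8, ∀ s ∈ (fL c).tails, 12 < s.length ∨
    (s.count c ≤ 5 ∧ ∀ a, a ≠ c → s.count a ≤ 1) := by decide

lemma inits_piece : ∀ c : Fin 8, ∀ s ∈ (fL c).inits, 12 < s.length ∨
    (s.count c ≤ 5 ∧ ∀ a, a ≠ c → s.count a ≤ 1) := by decide

lemma suffix_piece {c : Fin 8} {s : List (Fin 8)} (h : s <:+ fL c) (hl : s.length ≤ 12) :
    s.count c ≤ 5 ∧ ∀ a, a ≠ c → s.count a ≤ 1 := by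
  rcases tails_piece c s ((List.mem_tails _ _).2 h) with h' | h'
  · omega
  · exact h'

lemma prefix_piece {c : Fin 8} {s : List (Fin 8)} (h : s <+: fL c) (hl : s.length ≤ 12) :
    s.count c ≤ 5 ∧ ∀ a, a ≠ c → s.count a ≤ 1 := by
  rcases inits_piece c s ((List.mem_inits _ _).2 h) with h' | h'
  · omega
  · exact h'

/-- Splitting a morphic image at an arbitrary position. -/
lemma split (w : List (Fin 8)) : ∀ P R : List (Fin 8), fW w = P ++ R →
    ∃ (w₁ w₂ : List (Fin 8)) (m : Option (Fin 8)) (u v : List (Fin 8)),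
      w = w₁ ++ m.toList ++ w₂ ∧ P = fW w₁ ++ u ∧ R = v ++ fW w₂ ∧
      ((m = none ∧ u = [] ∧ v = []) ∨
       (∃ c, m = some c ∧ u ++ v = fL c ∧ u ≠ [] ∧ v ≠ [])) := by
  induction w with
  | nil =>
    intro P R h
    have : P = [] ∧ R = [] := by
      have := congrArg List.length h
      simp [fW] at this
      constructor <;> [skip; skip] <;>
        (apply List.eq_nil_of_length_eq_zero; omega)
    exact ⟨[], [], none, [], [], by simp [this.1, this.2, fW]⟩
  | cons c w ih =>
    intro P R h
    rcases Nat.lt_or_ge P.length 13 with hP | hP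
    · rcases Nat.eq_zero_or_pos P.length with h0 | h0
      · have hP0 : P = [] := List.eq_nil_of_length_eq_zero h0
        refine ⟨[], c :: w, none, [], [], by simp, by simp [hP0, fW], ?_, by simp⟩
        simp only [Option.toList_none, List.nil_append, fW]
        rw [hP0] at h; simpa [fW] using h.symm
      · -- cut strictly inside the first block
        have hpre : P <+: fL c := by
          refine List.prefix_of_prefix_length_le ⟨R, by rw [← h, fW_cons]⟩
            (List.prefix_append _ _) ?_
          simp [length_fL]; omega
        obtain ⟨P', hP'⟩ := hpre
        refine ⟨[], w, some c, P, P', by simp, by simp [fW], ?_, ?_⟩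
        · -- R = P' ++ fW w
          apply List.append_cancel_left (as := P)
          rw [← List.append_assoc, hP', ← fW_cons, h]
        · refine Or.inr ⟨c, rfl, hP', ?_, ?_⟩
          · intro hh; rw [hh] at h0; simp at h0
          · intro hh
            have := congrArg List.length hP'
            rw [hh] at this
            simp [length_fL] at this
            omega
    · -- P consumes the whole first block
      have h1 : P.take 13 = fL c := by
        have : (P ++ R).take 13 = (fL c ++ fW w).take 13 := by rw [← h, fW_cons]
        rw [List.take_append_of_le_length hP] at this
        rw [List.take_append_of_le_length (by simp [length_fL])] at this
        simpa [length_fL, List.take_of_length_le (l := fL c) (i := 13) (by simp [length_fL])] using this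
      have h2 : fW w = P.drop 13 ++ R := by
        have : (fL c ++ fW w).drop 13 = (P ++ R).drop 13 := by rw [← h, fW_cons]
        rw [List.drop_append_of_le_length (by simp [length_fL]),
            List.drop_append_of_le_length hP] at this
        simpa [length_fL, List.drop_of_length_le (l := fL c) (i := 13) (by simp [length_fL])] using this
      obtain ⟨w₁, w₂, m, u, v, hw, hPd, hR, hor⟩ := ih (P.drop 13) R h2
      refine ⟨c :: w₁, w₂, m, u, v, by simp [hw], ?_, hR, hor⟩
      rw [fW_cons, List.append_assoc, ← hPd]
      conv_lhs => rw [← List.take_append_drop 13 P]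
      rw [h1]


/-- Representation of the positive part of a small vector supported on two letters. -/
lemma side (g σ π : Fin 8 → ℤ) (c d : Fin 8)
    (hσ0 : ∀ a, 0 ≤ σ a) (hπ0 : ∀ a, 0 ≤ π a)
    (hσ : ∀ a, σ a ≤ if a = c then 5 else 1)
    (hπ : ∀ a, π a ≤ if a = d then 5 else 1)
    (hneg : ∀ a, a ≠ c → a ≠ d → g a ≤ 0)
    (hmain : ∀ a, 5 * g a ≤ σ a + π a + 1) :
    ∃ u v : Bool, (u = true → 2 ≤ σ c) ∧ (v = true → 1 ≤ π d) ∧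
      ∀ a, max (g a) 0 = (if u = true ∧ c = a then 1 else 0) +
        (if v = true ∧ d = a then 1 else 0) := by
  by_cases hcd : c = d
  · subst hcd
    -- single letter
    rcases le_or_gt (g c) 0 with h0 | h0
    · refine ⟨false, false, by simp, by simp, fun a => ?_⟩
      rcases eq_or_ne a c with rfl | ha
      · simp; omega
      · have := hneg a ha ha; simp; omega
    · have hle : g c ≤ 2 := by have := hmain c; have := hσ c; have := hπ c; simp at *; omega
      rcases eq_or_lt_of_le hle with h2 | h1
      · -- g c = 2 : both moves
        have hm := hmain c
        have h5 : σ c ≤ 5 := by have := hσ c; simpa using this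
        have h5' : π c ≤ 5 := by have := hπ c; simpa using this
        refine ⟨true, true, fun _ => by omega, fun _ => by omega, fun a => ?_⟩
        rcases eq_or_ne a c with rfl | ha
        · simp; omega
        · have := hneg a ha ha
          have hne : ¬ (c = a) := fun e => ha e.symm
          simp [hne]; omega
      · -- g c = 1
        have hg1 : g c = 1 := by omega
        have hm := hmain c
        rcases le_or_gt 2 (σ c) with hs | hs
        · refine ⟨true, false, fun _ => hs, by simp, fun a => ?_⟩
          rcases eq_or_ne a c with rfl | ha
          · simp; omega
          · have := hneg a ha ha
            have hne : ¬ (c = a) := fun e => ha e.symm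
            simp [hne]; omega
        · have hπ1 : 1 ≤ π c := by omega
          refine ⟨false, true, by simp, fun _ => hπ1, fun a => ?_⟩
          rcases eq_or_ne a c with rfl | ha
          · simp; omega
          · have := hneg a ha ha
            have hne : ¬ (c = a) := fun e => ha e.symm
            simp [hne]; omega
  · -- distinct letters
    have hgc : g c ≤ 1 := by
      have := hmain c; have := hσ c; have := hπ c
      simp [hcd] at *; omega
    have hgd : g d ≤ 1 := by
      have := hmain d; have := hσ d; have := hπ d
      have hdc : ¬ (d = c) := fun e => hcd e.symm
      simp [hdc] at *; omega
    refine ⟨decide (1 ≤ g c), decide (1 ≤ g d), ?_, ?_, fun a => ?_⟩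
    · intro hu
      have h1 : 1 ≤ g c := of_decide_eq_true hu
      have := hmain c; have := hπ c; have := hπ0 c
      simp [hcd] at *; omega
    · intro hv
      have h1 : 1 ≤ g d := of_decide_eq_true hv
      have := hmain d; have := hσ d; have := hσ0 d
      have hdc : ¬ (d = c) := fun e => hcd e.symm
      simp [hdc] at *; omega
    · rcases eq_or_ne a c with rfl | hac
      · have hne : ¬ (d = a) := fun e => hcd e.symm
        rcases le_or_gt 1 (g a) with h | h
        · simp [hne, decide_eq_true h]; omega
        · have h' : ¬ (1 ≤ g a) := by omega
          simp [hne, decide_eq_false h']; omega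
      · rcases eq_or_ne a d with rfl | had
        · have hne : ¬ (c = a) := fun e => hac e.symm
          rcases le_or_gt 1 (g a) with h | h
          · simp [hne, decide_eq_true h]; omega
          · have h' : ¬ (1 ≤ g a) := by omega
            simp [hne, decide_eq_false h']; omega
        · have h1 : ¬ (c = a) := fun e => hac e.symm
          have h2 : ¬ (d = a) := fun e => had e.symm
          have := hneg a hac had
          simp [h1, h2]; omega

def condL (b : Bool) (c : Fin 8) : List (Fin 8) := if b then [c] else []

lemma count_condL (b : Bool) (c a : Fin 8) :
    (condL b c).count a = if b = true ∧ c = a then 1 else 0 := by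
  cases b
  · simp [condL]
  · by_cases h : c = a
    · subst h; simp [condL]
    · have h' : ¬ (a = c) := fun e => h e.symm
      simp [condL, h, h', List.count_cons]

lemma length_condL (b : Bool) (c : Fin 8) :
    (condL b c).length = if b = true then 1 else 0 := by
  cases b <;> simp [condL]

/-- The core abelian adjustment lemma. -/
lemma core (c₁ d₁ c₂ d₂ : Fin 8) (s₁ p₁ s₂ p₂ x₁ x₂ : List (Fin 8))
    (hs₁c : s₁.count c₁ ≤ 5) (hs₁o : ∀ a, a ≠ c₁ → s₁.count a ≤ 1)
    (hp₁c : p₁.count d₁ ≤ 5) (hp₁o : ∀ a, a ≠ d₁ → p₁.count a ≤ 1)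
    (hs₂c : s₂.count c₂ ≤ 5) (hs₂o : ∀ a, a ≠ c₂ → s₂.count a ≤ 1)
    (hp₂c : p₂.count d₂ ≤ 5) (hp₂o : ∀ a, a ≠ d₂ → p₂.count a ≤ 1)
    (hls₁ : s₁.length ≤ 12) (hlp₁ : p₁.length ≤ 12)
    (hls₂ : s₂.length ≤ 12) (hlp₂ : p₂.length ≤ 12)
    (hperm : (s₁ ++ fW x₁ ++ p₁).Perm (s₂ ++ fW x₂ ++ p₂)) :
    ∃ u₁ v₁ u₂ v₂ : Bool,
      (u₁ = true → 2 ≤ s₁.length) ∧ (v₁ = true → p₁ ≠ []) ∧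
      (u₂ = true → s₂ ≠ []) ∧ (v₂ = true → p₂ ≠ []) ∧
      (d₁ = c₂ → ¬(v₁ = true ∧ u₂ = true)) ∧
      ((condL u₁ c₁ ++ x₁ ++ condL v₁ d₁).Perm (condL u₂ c₂ ++ x₂ ++ condL v₂ d₂)) := by
  -- length bookkeeping
  have hlen := hperm.length_eq
  simp only [List.length_append, length_fW] at hlen
  have ht : x₁.length ≤ x₂.length + 1 ∧ x₂.length ≤ x₁.length + 1 := by omega
  -- counts
  have hcnt : ∀ a : Fin 8, s₁.count a + (x₁.length + 5 * x₁.count a + p₁.count a)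
      = s₂.count a + (x₂.length + 5 * x₂.count a + p₂.count a) := by
    intro a
    have := hperm.count_eq a
    simpa [List.count_append, count_fW] using this
  -- integer versions
  set g : Fin 8 → ℤ := fun a => (x₁.count a : ℤ) - x₂.count a with hg
  have hmain2 : ∀ a, 5 * g a ≤ (s₂.count a : ℤ) + p₂.count a + 1 := by
    intro a; have := hcnt a; simp only [hg]
    have h1 := ht.1; have h2 := ht.2
    omega
  have hmain1 : ∀ a, 5 * (-g a) ≤ (s₁.count a : ℤ) + p₁.count a + 1 := by
    intro a; have := hcnt a; simp only [hg]
    have h1 := ht.1; have h2 := ht.2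
    omega
  have hneg2 : ∀ a, a ≠ c₂ → a ≠ d₂ → g a ≤ 0 := by
    intro a h1 h2
    have hb1 := hs₂o a h1; have hb2 := hp₂o a h2
    have := hmain2 a; omega
  have hneg1 : ∀ a, a ≠ c₁ → a ≠ d₁ → -g a ≤ 0 := by
    intro a h1 h2
    have hb1 := hs₁o a h1; have hb2 := hp₁o a h2
    have := hmain1 a; omega
  obtain ⟨u₂, v₂, hu₂, hv₂, hrep2⟩ := side g (fun a => (s₂.count a : ℤ))
    (fun a => (p₂.count a : ℤ)) c₂ d₂ (fun a => by positivity) (fun a => by positivity)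
    (fun a => by by_cases h : a = c₂ <;> simp [h] <;> [exact_mod_cast hs₂c; exact_mod_cast hs₂o a h])
    (fun a => by by_cases h : a = d₂ <;> simp [h] <;> [exact_mod_cast hp₂c; exact_mod_cast hp₂o a h])
    hneg2 hmain2
  obtain ⟨u₁, v₁, hu₁, hv₁, hrep1⟩ := side (fun a => -g a) (fun a => (s₁.count a : ℤ))
    (fun a => (p₁.count a : ℤ)) c₁ d₁ (fun a => by positivity) (fun a => by positivity)
    (fun a => by by_cases h : a = c₁ <;> simp [h] <;> [exact_mod_cast hs₁c; exact_mod_cast hs₁o a h])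
    (fun a => by by_cases h : a = d₁ <;> simp [h] <;> [exact_mod_cast hp₁c; exact_mod_cast hp₁o a h])
    hneg1 hmain1
  refine ⟨u₁, v₁, u₂, v₂, ?_, ?_, ?_, ?_, ?_, ?_⟩
  · intro h
    have := hu₁ h
    have : 2 ≤ s₁.count c₁ := by exact_mod_cast this
    calc 2 ≤ s₁.count c₁ := this
    _ ≤ s₁.length := List.count_le_length
  · intro h
    have := hv₁ h
    have h1 : 1 ≤ p₁.count d₁ := by exact_mod_cast this
    have := List.count_pos_iff.mp (by omega : 0 < p₁.count d₁)
    exact List.ne_nil_of_mem this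
  · intro h
    have := hu₂ h
    have h1 : 2 ≤ s₂.count c₂ := by exact_mod_cast this
    have := List.count_pos_iff.mp (by omega : 0 < s₂.count c₂)
    exact List.ne_nil_of_mem this
  · intro h
    have := hv₂ h
    have h1 : 1 ≤ p₂.count d₂ := by exact_mod_cast this
    have := List.count_pos_iff.mp (by omega : 0 < p₂.count d₂)
    exact List.ne_nil_of_mem this
  · rintro rfl ⟨h1, h2⟩
    have e1 := hrep1 d₁
    have e2 := hrep2 d₁
    simp only [h1, h2, true_and, eq_self_iff_true, if_true] at e1 e2
    have hb1 : (0:ℤ) ≤ if u₁ = true ∧ c₁ = d₁ then 1 else 0 := by split <;> omega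
    have hb2 : (0:ℤ) ≤ if v₂ = true ∧ d₂ = d₁ then 1 else 0 := by split <;> omega
    rcases le_total (g d₁) 0 with h | h
    · rw [max_eq_right h] at e2; omega
    · rw [max_eq_right (by omega : -g d₁ ≤ 0)] at e1; omega
  · rw [List.perm_iff_count]
    intro a
    have e1 := hrep1 a
    have e2 := hrep2 a
    simp only [List.count_append, count_condL]
    have key : (x₁.count a : ℤ) + (if u₁ = true ∧ c₁ = a then 1 else 0) + (if v₁ = true ∧ d₁ = a then 1 else 0)
        = (x₂.count a : ℤ) + (if u₂ = true ∧ c₂ = a then 1 else 0) + (if v₂ = true ∧ d₂ = a then 1 else 0) := by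
      have hgid : g a = max (g a) 0 - max (-g a) 0 := by
        rcases le_total (g a) 0 with h | h
        · rw [max_eq_right h, max_eq_left (by omega : 0 ≤ -g a)]; ring
        · rw [max_eq_left h, max_eq_right (by omega : -g a ≤ 0)]; ring
      simp only [hg] at hgid e1 e2 ⊢
      omega
    rw [← Nat.cast_inj (R := ℤ)]
    push_cast
    convert key using 2 <;> omega


/-- Final numeric inequalities. -/
lemma arith (n : ℝ) (hn : 1 < n) (L M S T ls₁ lp₂ ls₂ : ℕ) (u₁ u₂ v₂ : ℕ)
    (hML : M ≤ L) (hM : 24 * n ≤ (M : ℝ))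
    (hls₁ : ls₁ ≤ 12) (hlp₂ : lp₂ ≤ 12) (hls₂ : ls₂ ≤ 12)
    (hu₁ : u₁ ≤ 1) (hu₂ : u₂ ≤ 1) (hv₂ : v₂ ≤ 1)
    (hu₁s : u₁ = 1 → 2 ≤ ls₁) (hu₂s : u₂ = 1 → 1 ≤ ls₂)
    (hS : 13 * S + ls₁ + 13 * u₂ = L + ls₂ + 13 * u₁)
    (hT : 13 * T + ls₁ + lp₂ = L + M + 13 * u₁ + 13 * v₂) :
    (13 * n / (n + 1)) * (S : ℝ) ≤ (L : ℝ) ∧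
    ((L : ℝ) + M) / L ≤ (T : ℝ) / S + 72 / L := by
  have hM25 : 25 ≤ M := by
    by_contra h
    push_neg at h
    have : (M : ℝ) ≤ 24 := by exact_mod_cast Nat.lt_succ_iff.mp h
    nlinarith
  have hL : 25 ≤ L := le_trans hM25 hML
  have hS1 : 1 ≤ S := by
    rcases Nat.eq_zero_or_pos u₂ with h | h
    · omega
    · have := hu₂s (by omega); omega
  have hS24 : 13 * S ≤ L + 24 := by
    rcases Nat.eq_zero_or_pos u₁ with h | h
    · omega
    · have := hu₁s (by omega); omega
  have hLpos : (0:ℝ) < L := by positivity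
  have hSpos : (0:ℝ) < S := by exact_mod_cast hS1
  have hn1 : (0:ℝ) < n + 1 := by linarith
  constructor
  · rw [div_mul_eq_mul_div, div_le_iff₀ hn1]
    have h1 : (13 * S : ℝ) ≤ (L : ℝ) + 24 := by exact_mod_cast hS24
    have h2 : 24 * n ≤ (L : ℝ) := le_trans hM (by exact_mod_cast hML)
    nlinarith
  · -- integer inequality (L+M) * (13 S) ≤ L * (13 T) + 72 * (13 S), done in ℤ
    have hZ : ((L : ℤ) + M) * (13 * S) ≤ L * (13 * T) + 72 * (13 * S) := by
      have e13S : (13 * S : ℤ) = L + ls₂ + 13 * u₁ - ls₁ - 13 * u₂ := by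
        have := hS; omega
      have e13T : (13 * T : ℤ) = L + M + 13 * u₁ + 13 * v₂ - ls₁ - lp₂ := by
        have := hT; omega
      rw [e13S, e13T]
      set e : ℤ := (ls₂ : ℤ) + 13 * u₁ - ls₁ - 13 * u₂ with he
      have key : ((L:ℤ) + M - 72) * e ≤ L * (13 * u₁ + 13 * v₂ + 72 - ls₁ - lp₂) := by
        rcases le_or_gt e 0 with hepos | hepos
        · rcases le_or_gt 72 ((L:ℤ) + M) with h72 | h72
          · have h1 : (0:ℤ) ≤ (L:ℤ) + M - 72 := by omega
            have h2 : ((L:ℤ) + M - 72) * e ≤ 0 := mul_nonpos_of_nonneg_of_nonpos h1 hepos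
            have h3 : (0:ℤ) ≤ L * (13 * u₁ + 13 * v₂ + 72 - ls₁ - lp₂) := by
              apply mul_nonneg (by positivity); omega
            omega
          · -- L+M < 72 : small case
            have hL' : (25:ℤ) ≤ L := by exact_mod_cast hL
            have hM' : (25:ℤ) ≤ M := by exact_mod_cast hM25
            have h1 : (-22:ℤ) ≤ (L:ℤ) + M - 72 := by omega
            have h2 : (-25:ℤ) ≤ e := by omega
            nlinarith
        · -- e > 0
          have h2L : (L:ℤ) + M - 72 ≤ 2 * L := by
            have : (M:ℤ) ≤ L := by exact_mod_cast hML
            omega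
          have hcase : 2 * e ≤ 13 * u₁ + 48 := by
            rcases Nat.eq_zero_or_pos u₁ with h | h
            · have : u₁ = 0 := h; omega
            · have := hu₁s (by omega); omega
          have hr : (0:ℤ) ≤ (L:ℤ) := by positivity
          have h3 : (L:ℤ) * (13 * (u₁:ℤ) + 48) ≤ (L:ℤ) * (13 * (u₁:ℤ) + 13 * v₂ + 72 - ls₁ - lp₂) := by
            apply mul_le_mul_of_nonneg_left _ hr
            omega
          have h4 : ((L:ℤ) + M - 72) * e ≤ 2 * (L:ℤ) * e :=
            mul_le_mul_of_nonneg_right h2L (le_of_lt hepos)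
          have h6 : 2 * (L:ℤ) * e ≤ (L:ℤ) * (13 * (u₁:ℤ) + 48) := by
            have h5 : 2 * (L:ℤ) * e = (L:ℤ) * (2 * e) := by ring
            rw [h5]
            exact mul_le_mul_of_nonneg_left hcase hr
          linarith
      have expand : ((L:ℤ) + M) * ((L:ℤ) + ls₂ + 13 * u₁ - ls₁ - 13 * u₂)
          - ((L:ℤ) * ((L:ℤ) + M + 13 * u₁ + 13 * v₂ - ls₁ - lp₂)
            + 72 * ((L:ℤ) + ls₂ + 13 * u₁ - ls₁ - 13 * u₂))
          = ((L:ℤ) + M - 72) * e - (L:ℤ) * (13 * (u₁:ℤ) + 13 * v₂ + 72 - ls₁ - lp₂) := by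
        rw [he]; ring
      linarith [key, expand.le, expand.ge]
    -- convert to reals
    have hZ' : ((L : ℝ) + M) * S ≤ L * T + 72 * S := by
      have h13 : ((L : ℝ) + M) * (13 * S) ≤ L * (13 * T) + 72 * (13 * S) := by
        exact_mod_cast hZ
      linarith
    rw [div_add_div _ _ (ne_of_gt hSpos) (ne_of_gt hLpos), div_le_div_iff₀ hLpos (by positivity)]
    have hfin := mul_le_mul_of_nonneg_right hZ' hLpos.le
    nlinarith [hfin]


lemma take_piece {α : Type*} {A B s R : List α} (h : A ++ B = s ++ R) (hl : s.length ≤ A.length) :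
    ∃ A', A = s ++ A' ∧ A' ++ B = R := by
  have hpre : s <+: A :=
    List.prefix_of_prefix_length_le ⟨R, h.symm⟩ (List.prefix_append A B) hl
  obtain ⟨A', rfl⟩ := hpre
  refine ⟨A', rfl, ?_⟩
  rw [List.append_assoc] at h
  exact List.append_cancel_left h

lemma split' (w P R : List (Fin 8)) (h : fW w = P ++ R) :
    ∃ (w₁ w₂ : List (Fin 8)) (m : Option (Fin 8)) (u v : List (Fin 8)),
      w = w₁ ++ m.toList ++ w₂ ∧ P = fW w₁ ++ u ∧ R = v ++ fW w₂ ∧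
      u ++ v = fW m.toList ∧ u.length ≤ 12 ∧ v.length ≤ 12 ∧
      (u ≠ [] → m = some (m.getD 0)) ∧ (v ≠ [] → m = some (m.getD 0)) ∧
      u <+: fL (m.getD 0) ∧ v <:+ fL (m.getD 0) := by
  obtain ⟨w₁, w₂, m, u, v, hw, hP, hR, hor⟩ := split w P R h
  rcases hor with ⟨rfl, rfl, rfl⟩ | ⟨c, rfl, hcat, hu, hv⟩
  · exact ⟨w₁, w₂, none, [], [], by simpa using hw, by simpa using hP, by simpa using hR,
      rfl, by simp, by simp, by simp, by simp, List.nil_prefix, List.nil_suffix⟩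
  · have hlen : u.length + v.length = 13 := by
      have := congrArg List.length hcat; simpa [length_fL] using this
    have hu1 : 1 ≤ u.length := List.length_pos_iff.mpr hu
    have hv1 : 1 ≤ v.length := List.length_pos_iff.mpr hv
    refine ⟨w₁, w₂, some c, u, v, hw, hP, hR, ?_, by omega, by omega,
      fun _ => rfl, fun _ => rfl, ⟨v, by simpa using hcat⟩, ⟨u, by simpa using hcat⟩⟩
    simp [fW]; exact hcat

lemma J1 (b : Bool) (c : Fin 8) (lst : List (Fin 8)) (h : b = true → lst = [c]) :
    condL b c ++ (if b = true then [] else lst) = lst := by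
  cases b
  · simp [condL]
  · simp [condL, h rfl]

lemma J2 (b : Bool) (c : Fin 8) (lst : List (Fin 8)) (h : b = true → lst = [c]) :
    (if b = true then [] else lst) ++ condL b c = lst := by
  cases b
  · simp [condL]
  · simp [condL, h rfl]

lemma J3 (b₁ b₂ : Bool) (c : Fin 8) (lst : List (Fin 8)) (h : lst = [c])
    (hnot : ¬(b₁ = true ∧ b₂ = true)) :
    condL b₁ c ++ ((if b₁ = true ∨ b₂ = true then [] else lst) ++ condL b₂ c) = lst := by
  cases b₁ <;> cases b₂ <;> simp [condL, h] at hnot ⊢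


lemma J1' (b : Bool) (c : Fin 8) (lst r : List (Fin 8)) (h : b = true → lst = [c]) :
    condL b c ++ ((if b = true then [] else lst) ++ r) = lst ++ r := by
  rw [← List.append_assoc, J1 b c lst h]

lemma J2' (b : Bool) (c : Fin 8) (lst r : List (Fin 8)) (h : b = true → lst = [c]) :
    (if b = true then [] else lst) ++ (condL b c ++ r) = lst ++ r := by
  rw [← List.append_assoc, J2 b c lst h]

lemma J3' (b₁ b₂ : Bool) (c : Fin 8) (lst r : List (Fin 8)) (h : lst = [c])
    (hnot : ¬(b₁ = true ∧ b₂ = true)) :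
    condL b₁ c ++ ((if b₁ = true ∨ b₂ = true then [] else lst) ++ (condL b₂ c ++ r))
      = lst ++ r := by
  have h3 := J3 b₁ b₂ c lst h hnot
  rw [← List.append_assoc] at h3
  calc condL b₁ c ++ ((if b₁ = true ∨ b₂ = true then [] else lst) ++ (condL b₂ c ++ r))
      = ((condL b₁ c ++ if b₁ = true ∨ b₂ = true then [] else lst) ++ condL b₂ c) ++ r := by
        simp [List.append_assoc]
    _ = lst ++ r := by rw [h3]

lemma finisher (n : ℝ) (hn : 1 < n) (X₁ Y X₂ x yw z : List (Fin 8)) (K : ℕ)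
    (hinf : x ++ yw ++ z <:+: fIter K)
    (hpermC : x.Perm z) (hX2 : X₂.length = X₁.length)
    (hM : 24 * n ≤ (X₁.length : ℝ))
    (ls₁ ls₂ lp₂ n₁ n₂ n₄ : ℕ)
    (hls₁ : ls₁ ≤ 12) (hls₂ : ls₂ ≤ 12) (hlp₂ : lp₂ ≤ 12)
    (hn₁ : n₁ ≤ 1) (hn₂ : n₂ ≤ 1) (hn₄ : n₄ ≤ 1)
    (hn₁s : n₁ = 1 → 2 ≤ ls₁) (hn₂s : n₂ = 1 → 1 ≤ ls₂)
    (hS : 13 * (x ++ yw).length + ls₁ + 13 * n₂ = (X₁.length + Y.length) + ls₂ + 13 * n₁)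
    (hT : 13 * (x ++ yw ++ z).length + ls₁ + lp₂
        = (X₁.length + Y.length) + X₁.length + 13 * n₁ + 13 * n₄) :
    ∃ x' y' z' : List (Fin 8),
      FactorFP (x' ++ y' ++ z') ∧ x'.Perm z' ∧
      (13 * n / (n + 1)) * ((x' ++ y').length : ℝ) ≤ ((X₁ ++ Y).length : ℝ) ∧
      ((X₁ ++ Y ++ X₂).length : ℝ) / ((X₁ ++ Y).length : ℝ) ≤
        ((x' ++ y' ++ z').length : ℝ) / ((x' ++ y').length : ℝ)
          + 72 / ((X₁ ++ Y).length : ℝ) := by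
  obtain ⟨h1, h2⟩ := arith n hn (X₁.length + Y.length) X₁.length (x ++ yw).length
    (x ++ yw ++ z).length ls₁ lp₂ ls₂ n₁ n₂ n₄ (Nat.le_add_right _ _) hM
    hls₁ hlp₂ hls₂ hn₁ hn₂ hn₄ hn₁s hn₂s hS hT
  refine ⟨x, yw, z, ⟨K, hinf⟩, hpermC, ?_, ?_⟩
  · simpa [List.length_append] using h1
  · push_cast [List.length_append, hX2] at h2 ⊢
    linarith [h2]


theorem stmt9 (n : ℝ) (hn : 1 < n)
    (X₁ Y X₂ : List (Fin 8))
    (hfac : FactorFP (X₁ ++ Y ++ X₂))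
    (hperm : X₁.Perm X₂)
    (hlen : 24 * n ≤ (X₁.length : ℝ)) :
    ∃ x y z : List (Fin 8),
      FactorFP (x ++ y ++ z) ∧ x.Perm z ∧
      (13 * n / (n + 1)) * ((x ++ y).length : ℝ) ≤ ((X₁ ++ Y).length : ℝ) ∧
      ((X₁ ++ Y ++ X₂).length : ℝ) / ((X₁ ++ Y).length : ℝ) ≤
        ((x ++ y ++ z).length : ℝ) / ((x ++ y).length : ℝ)
          + 72 / ((X₁ ++ Y).length : ℝ) := by
  have hX2 : X₂.length = X₁.length := hperm.length_eq.symm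
  have hX25 : 25 ≤ X₁.length := by
    by_contra h
    push_neg at h
    have h24 : (X₁.length : ℝ) ≤ 24 := by exact_mod_cast Nat.lt_succ_iff.mp h
    nlinarith
  obtain ⟨N, hN⟩ := hfac
  cases N with
  | zero =>
    exfalso
    have := hN.length_le
    simp only [List.length_append, fIter, Function.iterate_zero, id_eq,
      List.length_cons, List.length_nil] at this
    omega
  | succ K =>
  have hfw : fIter (K + 1) = fW (fIter K) := Function.iterate_succ_apply' fW K [0]
  rw [hfw] at hN
  obtain ⟨P, Q, hPQ⟩ := hN
  have h0 : fW (fIter K) = P ++ (X₁ ++ (Y ++ (X₂ ++ Q))) := by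
    rw [← hPQ]; simp [List.append_assoc]
  obtain ⟨w₁, W₂, m₁, u₁p, s₁, hW1, hP1, hR1, hcat₁, hlu₁, hls₁, hmu₁, hms₁, hpre₁, hsuf₁⟩ :=
    split' (fIter K) _ _ h0
  obtain ⟨X₁', hX₁eq, hrest₁⟩ := take_piece hR1 (le_trans hls₁ (by omega))
  obtain ⟨x₁, W₃, m₂, p₁, v₂p, hW2, hXP1, hR2, hcat₂, hlp₁, hlv₂, hmu₂, hms₂, hpre₂, hsuf₂⟩ :=
    split' W₂ _ _ hrest₁.symm
  -- counts for the s₁ piece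
  have hs₁b := suffix_piece hsuf₁ hls₁
  have hp₁b := prefix_piece hpre₂ hlp₁
  have hX₁dec : X₁ = s₁ ++ fW x₁ ++ p₁ := by
    rw [hX₁eq, hXP1, List.append_assoc]
  have hlenX₁ : X₁.length = s₁.length + 13 * x₁.length + p₁.length := by
    rw [hX₁dec]; simp [List.length_append, length_fW]; ring
  rcases le_or_gt v₂p.length Y.length with hcase | hcase
  · -- CASE B : the second cut is beyond the block m₂
    obtain ⟨Y', hYeq, hrest₂⟩ := take_piece hR2 hcase
    obtain ⟨y, W₄, m₃, u₃p, s₂, hW3, hYP, hR3, hcat₃, hlu₃, hls₂, hmu₃, hms₃, hpre₃, hsuf₃⟩ :=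
      split' W₃ _ _ hrest₂.symm
    obtain ⟨X₂', hX₂eq, hrest₃⟩ := take_piece hR3 (le_trans hls₂ (by omega))
    obtain ⟨x₂, W₅, m₄, p₂, v₄p, hW4, hXP2, hR4, hcat₄, hlp₂, hlv₄, hmu₄, hms₄, hpre₄, hsuf₄⟩ :=
      split' W₄ _ _ hrest₃.symm
    have hs₂b := suffix_piece hsuf₃ hls₂
    have hp₂b := prefix_piece hpre₄ hlp₂
    have hX₂dec : X₂ = s₂ ++ fW x₂ ++ p₂ := by
      rw [hX₂eq, hXP2, List.append_assoc]
    have hlenX₂ : X₂.length = s₂.length + 13 * x₂.length + p₂.length := by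
      rw [hX₂dec]; simp [List.length_append, length_fW]; ring
    have hlenY : Y.length = v₂p.length + 13 * y.length + u₃p.length := by
      rw [hYeq, hYP]; simp [List.length_append, length_fW]; ring
    have hpermX : (s₁ ++ fW x₁ ++ p₁).Perm (s₂ ++ fW x₂ ++ p₂) := by
      rw [← hX₁dec, ← hX₂dec]; exact hperm
    obtain ⟨u₁, v₁, u₂, v₂, hcu₁, hcv₁, hcu₂, hcv₂, _hNot, hpermC⟩ :=
      core (m₁.getD 0) (m₂.getD 0) (m₃.getD 0) (m₄.getD 0) s₁ p₁ s₂ p₂ x₁ x₂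
        hs₁b.1 hs₁b.2 hp₁b.1 hp₁b.2 hs₂b.1 hs₂b.2 hp₂b.1 hp₂b.2
        hls₁ hlp₁ hls₂ hlp₂ hpermX
    -- block presence
    have hbm₁ : u₁ = true → m₁.toList = [m₁.getD 0] := by
      intro h
      have h2 := hcu₁ h
      have : s₁ ≠ [] := by intro hh; rw [hh] at h2; simp at h2
      rw [hms₁ this]; rfl
    have hbm₂ : v₁ = true → m₂.toList = [m₂.getD 0] := by
      intro h; rw [hmu₂ (hcv₁ h)]; rfl
    have hbm₃ : u₂ = true → m₃.toList = [m₃.getD 0] := by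
      intro h; rw [hms₃ (hcu₂ h)]; rfl
    have hbm₄ : v₂ = true → m₄.toList = [m₄.getD 0] := by
      intro h; rw [hmu₄ (hcv₂ h)]; rfl
    set x : List (Fin 8) := condL u₁ (m₁.getD 0) ++ x₁ ++ condL v₁ (m₂.getD 0) with hxdef
    set yw : List (Fin 8) := (if v₁ = true then [] else m₂.toList) ++ y
      ++ (if u₂ = true then [] else m₃.toList) with hywdef
    set z : List (Fin 8) := condL u₂ (m₃.getD 0) ++ x₂ ++ condL v₂ (m₄.getD 0) with hzdef
    -- infix
    have hchain : fIter K = w₁ ++ (m₁.toList ++ (x₁ ++ (m₂.toList ++ (y ++ (m₃.toList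
        ++ (x₂ ++ (m₄.toList ++ W₅))))))) := by
      rw [hW1, hW2, hW3, hW4]; simp [List.append_assoc]
    have hinf : x ++ yw ++ z <:+: fIter K := by
      refine ⟨w₁ ++ (if u₁ = true then [] else m₁.toList),
        (if v₂ = true then [] else m₄.toList) ++ W₅, ?_⟩
      simp only [hxdef, hywdef, hzdef, List.append_assoc]
      rw [J2' u₁ (m₁.getD 0) m₁.toList _ hbm₁, J1' v₁ (m₂.getD 0) m₂.toList _ hbm₂,
        J2' u₂ (m₃.getD 0) m₃.toList _ hbm₃, J1' v₂ (m₄.getD 0) m₄.toList _ hbm₄,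
        hchain]
    -- length equations
    have hxyw : x ++ yw ++ condL u₂ (m₃.getD 0)
        = condL u₁ (m₁.getD 0) ++ (x₁ ++ (m₂.toList ++ (y ++ m₃.toList))) := by
      simp only [hxdef, hywdef, List.append_assoc]
      rw [J1' v₁ (m₂.getD 0) m₂.toList _ hbm₂, J2 u₂ (m₃.getD 0) m₃.toList hbm₃]
    have hlxyw := congrArg List.length hxyw
    simp only [List.length_append, length_condL] at hlxyw
    have hl₂ := congrArg List.length hcat₂
    have hl₃ := congrArg List.length hcat₃
    simp only [List.length_append, length_fW] at hl₂ hl₃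
    have hlz : z.length = (condL u₂ (m₃.getD 0)).length + x₂.length
        + (condL v₂ (m₄.getD 0)).length := by
      rw [hzdef]; simp [List.length_append]; omega
    -- boolean lengths
    have hn₁c : (condL u₁ (m₁.getD 0)).length ≤ 1 := by cases u₁ <;> simp [condL]
    have hn₂c : (condL u₂ (m₃.getD 0)).length ≤ 1 := by cases u₂ <;> simp [condL]
    have hn₄c : (condL v₂ (m₄.getD 0)).length ≤ 1 := by cases v₂ <;> simp [condL]
    have hn₁s : (condL u₁ (m₁.getD 0)).length = 1 → 2 ≤ s₁.length := by
      cases u₁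
      · simp [condL]
      · intro _; exact hcu₁ rfl
    have hn₂s : (condL u₂ (m₃.getD 0)).length = 1 → 1 ≤ s₂.length := by
      cases u₂
      · simp [condL]
      · intro _
        have := hcu₂ rfl
        exact List.length_pos_iff.mpr this
    have hmt₂ : m₂.toList.length ≤ 1 := by cases m₂ <;> simp
    have hmt₃ : m₃.toList.length ≤ 1 := by cases m₃ <;> simp
    apply finisher n hn X₁ Y X₂ x yw z K hinf hpermC hX2 hlen s₁.length s₂.length p₂.length
      (condL u₁ (m₁.getD 0)).length (condL u₂ (m₃.getD 0)).length
      (condL v₂ (m₄.getD 0)).length hls₁ hls₂ hlp₂ hn₁c hn₂c hn₄c hn₁s hn₂s ?_ ?_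
    · simp only [List.length_append, length_condL] at hlxyw hlz ⊢
      omega
    · simp only [List.length_append, length_condL] at hlxyw hlz ⊢
      omega
  · -- CASE A : X₂ starts inside the block m₂
    obtain ⟨s₂, hv₂peq, hrest₂⟩ := take_piece hR2.symm (le_of_lt hcase)
    -- hv₂peq : v₂p = Y ++ s₂, hrest₂ : s₂ ++ fW W₃ = X₂ ++ Q
    have hls₂ : s₂.length ≤ 12 := by
      have := congrArg List.length hv₂peq
      simp only [List.length_append] at this
      omega
    obtain ⟨X₂', hX₂eq, hrest₃⟩ := take_piece hrest₂.symm (le_trans hls₂ (by omega))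
    obtain ⟨x₂, W₄, m₄, p₂, v₄p, hW3, hXP2, hR4, hcat₄, hlp₂, hlv₄, hmu₄, hms₄, hpre₄, hsuf₄⟩ :=
      split' W₃ _ _ hrest₃.symm
    have hsv : s₂ <:+ v₂p := ⟨Y, hv₂peq.symm⟩
    have hsuf₂' : s₂ <:+ fL (m₂.getD 0) := List.IsSuffix.trans hsv hsuf₂
    have hs₂b := suffix_piece hsuf₂' hls₂
    have hp₂b := prefix_piece hpre₄ hlp₂
    have hX₂dec : X₂ = s₂ ++ fW x₂ ++ p₂ := by
      rw [hX₂eq, hXP2, List.append_assoc]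
    have hlenX₂ : X₂.length = s₂.length + 13 * x₂.length + p₂.length := by
      rw [hX₂dec]; simp [List.length_append, length_fW]; ring
    have hpermX : (s₁ ++ fW x₁ ++ p₁).Perm (s₂ ++ fW x₂ ++ p₂) := by
      rw [← hX₁dec, ← hX₂dec]; exact hperm
    obtain ⟨u₁, v₁, u₂, v₂, hcu₁, hcv₁, hcu₂, hcv₂, hNot, hpermC⟩ :=
      core (m₁.getD 0) (m₂.getD 0) (m₂.getD 0) (m₄.getD 0) s₁ p₁ s₂ p₂ x₁ x₂
        hs₁b.1 hs₁b.2 hp₁b.1 hp₁b.2 hs₂b.1 hs₂b.2 hp₂b.1 hp₂b.2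
        hls₁ hlp₁ hls₂ hlp₂ hpermX
    have hNot' : ¬(v₁ = true ∧ u₂ = true) := hNot rfl
    -- the middle block m₂ is present since v₂p ≠ []
    have hv₂ne : v₂p ≠ [] := by
      intro h
      rw [h] at hcase
      simp at hcase
    have hm₂some : m₂.toList = [m₂.getD 0] := by rw [hms₂ hv₂ne]; rfl
    have hbm₁ : u₁ = true → m₁.toList = [m₁.getD 0] := by
      intro h
      have h2 := hcu₁ h
      have : s₁ ≠ [] := by intro hh; rw [hh] at h2; simp at h2
      rw [hms₁ this]; rfl
    have hbm₄ : v₂ = true → m₄.toList = [m₄.getD 0] := by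
      intro h; rw [hmu₄ (hcv₂ h)]; rfl
    set x : List (Fin 8) := condL u₁ (m₁.getD 0) ++ x₁ ++ condL v₁ (m₂.getD 0) with hxdef
    set yw : List (Fin 8) := if v₁ = true ∨ u₂ = true then [] else m₂.toList with hywdef
    set z : List (Fin 8) := condL u₂ (m₂.getD 0) ++ x₂ ++ condL v₂ (m₄.getD 0) with hzdef
    have hJ3 := J3 v₁ u₂ (m₂.getD 0) m₂.toList hm₂some hNot'
    have hchain : fIter K = w₁ ++ (m₁.toList ++ (x₁ ++ (m₂.toList
        ++ (x₂ ++ (m₄.toList ++ W₄))))) := by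
      rw [hW1, hW2, hW3]; simp [List.append_assoc]
    have hinf : x ++ yw ++ z <:+: fIter K := by
      refine ⟨w₁ ++ (if u₁ = true then [] else m₁.toList),
        (if v₂ = true then [] else m₄.toList) ++ W₄, ?_⟩
      simp only [hxdef, hywdef, hzdef, List.append_assoc]
      rw [J2' u₁ (m₁.getD 0) m₁.toList _ hbm₁, J3' v₁ u₂ (m₂.getD 0) m₂.toList _ hm₂some hNot',
        J1' v₂ (m₄.getD 0) m₄.toList _ hbm₄, hchain]
    have hxyw : x ++ yw ++ condL u₂ (m₂.getD 0)
        = condL u₁ (m₁.getD 0) ++ (x₁ ++ m₂.toList) := by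
      simp only [hxdef, hywdef, List.append_assoc]
      rw [J3 v₁ u₂ (m₂.getD 0) m₂.toList hm₂some hNot']
    have hlxyw := congrArg List.length hxyw
    simp only [List.length_append, length_condL] at hlxyw
    have hl₂ := congrArg List.length hcat₂
    simp only [List.length_append, length_fW] at hl₂
    have hlv₂p := congrArg List.length hv₂peq
    simp only [List.length_append] at hlv₂p
    have hlz : z.length = (condL u₂ (m₂.getD 0)).length + x₂.length
        + (condL v₂ (m₄.getD 0)).length := by
      rw [hzdef]; simp [List.length_append]; omega
    have hn₁c : (condL u₁ (m₁.getD 0)).length ≤ 1 := by cases u₁ <;> simp [condL]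
    have hn₂c : (condL u₂ (m₂.getD 0)).length ≤ 1 := by cases u₂ <;> simp [condL]
    have hn₄c : (condL v₂ (m₄.getD 0)).length ≤ 1 := by cases v₂ <;> simp [condL]
    have hn₁s : (condL u₁ (m₁.getD 0)).length = 1 → 2 ≤ s₁.length := by
      cases u₁
      · simp [condL]
      · intro _; exact hcu₁ rfl
    have hn₂s : (condL u₂ (m₂.getD 0)).length = 1 → 1 ≤ s₂.length := by
      cases u₂
      · simp [condL]
      · intro _
        have := hcu₂ rfl
        exact List.length_pos_iff.mpr this
    have hmt₂ : m₂.toList.length = 1 := by rw [hm₂some]; rfl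
    apply finisher n hn X₁ Y X₂ x yw z K hinf hpermC hX2 hlen s₁.length s₂.length p₂.length
      (condL u₁ (m₁.getD 0)).length (condL u₂ (m₂.getD 0)).length
      (condL v₂ (m₄.getD 0)).length hls₁ hls₂ hlp₂ hn₁c hn₂c hn₄c hn₁s hn₂s ?_ ?_
    · simp only [List.length_append, length_condL] at hlxyw hlz ⊢
      omega
    · simp only [List.length_append, length_condL] at hlxyw hlz ⊢
      omega
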